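/- The crystal $\tilde B^{2,s}\otimes\tilde B^{2,s}$ is connected as a $D_n^{(1)}$-crystal: every vertex $b\otimes b'$ is joined by a path of crystal operators to $u_0\otimes u_0$, where $u_0$ is the unique element of the trivial component $B(0)$. -/

import Mathlib

/-- The Kashiwara operator `f_i` on a two-fold tensor product `b₂ ⊗ b₁ = (b₂, b₁)`
(signature rule): `f_i(b₂ ⊗ b₁) = f_i b₂ ⊗ b₁` if `ε_i(b₂) ≥ φ_i(b₁)`, else
`b₂ ⊗ f_i b₁`. -/
def tensorF {n : ℕ} {B : Type*} (f : Fin (n + 1) → B → Option B)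
    (phi eps : Fin (n + 1) → B → ℕ) (i : Fin (n + 1)) (x : B × B) : Option (B × B) :=
  if phi i x.2 ≤ eps i x.1 then (f i x.1).map (fun b => (b, x.2))
  else (f i x.2).map (fun b => (x.1, b))

/-- `e_i(b₂ ⊗ b₁) = e_i b₂ ⊗ b₁` if `ε_i(b₂) > φ_i(b₁)`, else `b₂ ⊗ e_i b₁`. -/
def tensorE {n : ℕ} {B : Type*} (e : Fin (n + 1) → B → Option B)
    (phi eps : Fin (n + 1) → B → ℕ) (i : Fin (n + 1)) (x : B × B) : Option (B × B) :=
  if phi i x.2 < eps i x.1 then (e i x.1).map (fun b => (b, x.2))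
  else (e i x.2).map (fun b => (x.1, b))

/-- The crystal `B̃^{2,s} ⊗ B̃^{2,s}` is connected as a
`D_n^{(1)}`-crystal: every vertex `b ⊗ b'` is joined by a path of crystal operators
to `u₀ ⊗ u₀`, where `u₀` is the unique element of the trivial component `B(0)`.
The hypotheses record the crystal structure of `B̃^{2,s} ≅ ⨁_{k=0}^{s} B(kϖ₂)`:
the string lengths `φ_i, ε_i`; the facts `φ₀(u_j) = s - j`, `ε₀(u_j) = s + j`,
`e₀(u_j) = u_{j-1}`; that `u₀` spans the trivial classical component; and that every
element can be raised to some classical highest weight vector `u_j` by the classical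
operators `e_i`, `i ≥ 1`. -/
theorem tensor_square_connected (n s : ℕ) (hn : 2 ≤ n)
    (B : Type*)
    (f e : Fin (n + 1) → B → Option B)
    (hef : ∀ i a b, f i a = some b ↔ e i b = some a)
    (phi eps : Fin (n + 1) → B → ℕ)
    (hphi0 : ∀ i b, phi i b = 0 ↔ f i b = none)
    (hphiS : ∀ i b b', f i b = some b' → phi i b = phi i b' + 1)
    (heps0 : ∀ i b, eps i b = 0 ↔ e i b = none)
    (hepsS : ∀ i b b', e i b = some b' → eps i b = eps i b' + 1)
    (u : ℕ → B)    -- classical highest weight vectors of the components `B(jϖ₂)`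
    (hphiu : ∀ j ≤ s, phi 0 (u j) = s - j ∧ eps 0 (u j) = s + j)
    (he0u : ∀ j, 0 < j → j ≤ s → e 0 (u j) = some (u (j - 1)))
    (hu0 : ∀ i : Fin (n + 1), 0 < (i : ℕ) → phi i (u 0) = 0 ∧ eps i (u 0) = 0)
    (hclass : ∀ b : B, ∃ j ≤ s, Relation.ReflTransGen
        (fun x y => ∃ i : Fin (n + 1), 0 < (i : ℕ) ∧ e i x = some y) b (u j)) :
    ∀ bb : B × B, Relation.ReflTransGen
      (fun x y => ∃ i : Fin (n + 1),
        tensorF f phi eps i x = some y ∨ tensorF f phi eps i y = some x ∨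
        tensorE e phi eps i x = some y ∨ tensorE e phi eps i y = some x)
      bb (u 0, u 0) := by
  intro bb
  obtain ⟨b, b'⟩ := bb
  set R : B × B → B × B → Prop := fun x y => ∃ i : Fin (n + 1),
      tensorF f phi eps i x = some y ∨ tensorF f phi eps i y = some x ∨
      tensorE e phi eps i x = some y ∨ tensorE e phi eps i y = some x with hR
  show Relation.ReflTransGen R (b, b') (u 0, u 0)
  have eSome : ∀ (i : Fin (n + 1)) (x : B), eps i x ≠ 0 → ∃ x0, e i x = some x0 := by
    intro i x h
    cases hx : e i x with
    | none => exact absurd ((heps0 i x).mpr hx) h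
    | some x0 => exact ⟨x0, rfl⟩
  -- raise the second component along an `e`-edge, first adjusting the first component
  have step2 : ∀ (N : ℕ) (x y y0 : B) (i : Fin (n + 1)), eps i x ≤ N → e i y = some y0 →
      ∃ x', Relation.ReflTransGen R (x, y) (x', y0) := by
    intro N
    induction N with
    | zero =>
      intro x y y0 i hle hy
      refine ⟨x, Relation.ReflTransGen.single ⟨i, Or.inr (Or.inr (Or.inl ?_))⟩⟩
      have hlt : ¬ phi i y < eps i x := by omega
      simp [tensorE, hlt, hy]
    | succ N ih =>
      intro x y y0 i hle hy
      by_cases h : phi i y < eps i x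
      · obtain ⟨x0, hx0⟩ := eSome i x (by omega)
        have hlt : eps i x0 ≤ N := by have := hepsS i x x0 hx0; omega
        obtain ⟨x', p⟩ := ih x0 y y0 i hlt hy
        refine ⟨x', Relation.ReflTransGen.head ⟨i, Or.inr (Or.inr (Or.inl ?_))⟩ p⟩
        simp [tensorE, h, hx0]
      · refine ⟨x, Relation.ReflTransGen.single ⟨i, Or.inr (Or.inr (Or.inl ?_))⟩⟩
        simp [tensorE, h, hy]
  -- lift a single-crystal `e`-path on the second component
  have lift2 : ∀ (x y z : B),
      Relation.ReflTransGen (fun a c => ∃ i : Fin (n + 1), e i a = some c) y z →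
      ∃ x', Relation.ReflTransGen R (x, y) (x', z) := by
    intro x y z h
    induction h with
    | refl => exact ⟨x, Relation.ReflTransGen.refl⟩
    | tail _ h2 ih =>
      obtain ⟨x', p⟩ := ih
      obtain ⟨i, he⟩ := h2
      obtain ⟨x'', p2⟩ := step2 (eps i x') x' _ _ i le_rfl he
      exact ⟨x'', p.trans p2⟩
  -- bring `u k` down to `u 0` via `e₀` in the single crystal
  have chain : ∀ k, k ≤ s → Relation.ReflTransGen
      (fun a c => ∃ i : Fin (n + 1), e i a = some c) (u k) (u 0) := by
    intro k
    induction k with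
    | zero => intro _; exact Relation.ReflTransGen.refl
    | succ k ih =>
      intro hk
      refine Relation.ReflTransGen.head ⟨0, ?_⟩ (ih (by omega))
      have := he0u (k + 1) (by omega) hk
      simpa using this
  obtain ⟨j, hj, hpath⟩ := hclass b'
  have hpath' : Relation.ReflTransGen (fun a c => ∃ i : Fin (n + 1), e i a = some c)
      b' (u 0) := by
    refine Relation.ReflTransGen.trans ?_ (chain j hj)
    exact Relation.ReflTransGen.mono (fun a c (h : ∃ i : Fin (n + 1), 0 < (i : ℕ) ∧ e i a = some c) => h.imp fun i hi => hi.2) _ _ hpath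
  obtain ⟨c, p1⟩ := lift2 b b' (u 0) hpath'
  -- classical moves on the first component when the second is `u 0`
  have step1 : ∀ (x x0 : B) (i : Fin (n + 1)), 0 < (i : ℕ) → e i x = some x0 →
      R (x, u 0) (x0, u 0) := by
    intro x x0 i hi hx
    refine ⟨i, Or.inr (Or.inr (Or.inl ?_))⟩
    have h1 : phi i (u 0) = 0 := (hu0 i hi).1
    have h2 : eps i x ≠ 0 := by
      intro h0
      rw [(heps0 i x).mp h0] at hx
      cases hx
    have hlt : phi i (u 0) < eps i x := by omega
    simp [tensorE, hlt, hx]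
  obtain ⟨k, hk, hcp⟩ := hclass c
  have lift1 : ∀ (x z : B),
      Relation.ReflTransGen (fun a c => ∃ i : Fin (n + 1), 0 < (i : ℕ) ∧ e i a = some c)
        x z → Relation.ReflTransGen R (x, u 0) (z, u 0) := by
    intro x z h
    induction h with
    | refl => exact Relation.ReflTransGen.refl
    | tail _ h2 ih =>
      obtain ⟨i, hi, he⟩ := h2
      exact ih.tail (step1 _ _ i hi he)
  have p2 : Relation.ReflTransGen R (c, u 0) (u k, u 0) := lift1 c (u k) hcp
  -- bring `(u m, u 0)` down to `(u 0, u 0)` via `e₀`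
  have p3 : ∀ m, m ≤ s → Relation.ReflTransGen R (u m, u 0) (u 0, u 0) := by
    intro m
    induction m with
    | zero => intro _; exact Relation.ReflTransGen.refl
    | succ m ih =>
      intro hm
      refine Relation.ReflTransGen.head ⟨0, Or.inr (Or.inr (Or.inl ?_))⟩ (ih (by omega))
      have h1 : phi (0 : Fin (n + 1)) (u 0) = s - 0 := (hphiu 0 (Nat.zero_le s)).1
      have h2 : eps (0 : Fin (n + 1)) (u (m + 1)) = s + (m + 1) := (hphiu (m + 1) hm).2
      have he : e (0 : Fin (n + 1)) (u (m + 1)) = some (u m) := by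
        have := he0u (m + 1) (by omega) hm
        simpa using this
      have hlt : phi (0 : Fin (n + 1)) (u 0) < eps (0 : Fin (n + 1)) (u (m + 1)) := by omega
      simp [tensorE, hlt, he]
  exact (p1.trans p2).trans (p3 k hk)
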